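/- Let f : ℝ^n → ℝ be convex and differentiable with L-Lipschitz gradient. Then ∇f is 1/L-cocoercive: ⟨u - v, ∇f(u) - ∇f(v)⟩ ≥ (1/L)‖∇f(u) - ∇f(v)‖² for all u, v (Baillon–Haddad). -/

import Mathlib

open scoped RealInnerProductSpace

variable {n : ℕ}

lemma aux_line_deriv (f : EuclideanSpace ℝ (Fin n) → ℝ) (hdiff : Differentiable ℝ f)
    (x d : EuclideanSpace ℝ (Fin n)) (t : ℝ) :
    HasDerivAt (fun s : ℝ => f (x + s • d)) ⟪gradient f (x + t • d), d⟫ t := by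
  have h1 : HasDerivAt (fun s : ℝ => x + s • d) d t := by
    simpa using ((hasDerivAt_id t).smul_const d).const_add x
  have h2 := (hdiff (x + t • d)).hasGradientAt
  rw [hasGradientAt_iff_hasFDerivAt] at h2
  have h3 := h2.comp_hasDerivAt t h1
  have h4 : ⟪gradient f (x + t • d), d⟫ = InnerProductSpace.toDual ℝ _ (gradient f (x + t • d)) d := rfl
  rw [h4]
  exact h3

lemma aux_conv (f : EuclideanSpace ℝ (Fin n) → ℝ) (hconv : ConvexOn ℝ Set.univ f)
    (hdiff : Differentiable ℝ f) (x y : EuclideanSpace ℝ (Fin n)) :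
    f x + ⟪gradient f x, y - x⟫ ≤ f y := by
  have hφ : ConvexOn ℝ Set.univ (fun s : ℝ => f (x + s • (y - x))) := by
    have := hconv.comp_affineMap (AffineMap.lineMap x y)
    simpa [Function.comp_def, AffineMap.lineMap_apply, add_comm, vsub_eq_sub] using this
  have hd := aux_line_deriv f hdiff x (y - x) 0
  simp only [zero_smul, add_zero] at hd
  have hs := hφ.le_slope_of_hasDerivAt (Set.mem_univ (0:ℝ)) (Set.mem_univ (1:ℝ))
    one_pos hd
  have hslope : slope (fun s : ℝ => f (x + s • (y - x))) 0 1 = f y - f x := by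
    simp [slope]
  rw [hslope] at hs
  linarith [hs]

lemma aux_descent (f : EuclideanSpace ℝ (Fin n) → ℝ) (L : ℝ) (hL : 0 < L)
    (hdiff : Differentiable ℝ f)
    (hlip : ∀ u v, ‖gradient f u - gradient f v‖ ≤ L * ‖u - v‖)
    (x y : EuclideanSpace ℝ (Fin n)) :
    f y ≤ f x + ⟪gradient f x, y - x⟫ + L / 2 * ‖y - x‖ ^ 2 := by
  set d := y - x with hd
  have hgcont : Continuous (gradient f) := by
    apply (LipschitzWith.of_dist_le_mul (K := ⟨L, hL.le⟩) ?_).continuous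
    intro a b
    rw [dist_eq_norm, dist_eq_norm]
    exact hlip a b
  have hφ'cont : Continuous (fun t : ℝ => ⟪gradient f (x + t • d), d⟫) := by
    exact (Continuous.inner (hgcont.comp (by continuity)) continuous_const)
  have hInt : IntervalIntegrable (fun t : ℝ => ⟪gradient f (x + t • d), d⟫)
      MeasureTheory.volume 0 1 := hφ'cont.intervalIntegrable 0 1
  have hFTC : ∫ t in (0:ℝ)..1, ⟪gradient f (x + t • d), d⟫ = f y - f x := by
    rw [intervalIntegral.integral_eq_sub_of_hasDerivAt
      (fun t _ => aux_line_deriv f hdiff x d t) hInt]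
    simp [hd]
  have hbound : ∀ t ∈ Set.Icc (0:ℝ) 1,
      ⟪gradient f (x + t • d), d⟫ ≤ ⟪gradient f x, d⟫ + L * ‖d‖ ^ 2 * t := by
    intro t ht
    have heq : ⟪gradient f (x + t • d), d⟫ - ⟪gradient f x, d⟫
        = ⟪gradient f (x + t • d) - gradient f x, d⟫ := by
      rw [inner_sub_left]
    have h2 := real_inner_le_norm (gradient f (x + t • d) - gradient f x) d
    have h3 : ‖gradient f (x + t • d) - gradient f x‖ ≤ L * (t * ‖d‖) := by
      have := hlip (x + t • d) x
      simpa [norm_smul, abs_of_nonneg ht.1] using this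
    nlinarith [norm_nonneg d, norm_nonneg (gradient f (x + t • d) - gradient f x)]
  have hmono : ∫ t in (0:ℝ)..1, ⟪gradient f (x + t • d), d⟫
      ≤ ∫ t in (0:ℝ)..1, (⟪gradient f x, d⟫ + L * ‖d‖ ^ 2 * t) := by
    apply intervalIntegral.integral_mono_on (by norm_num) hInt
    · exact (continuous_const.add (continuous_const.mul continuous_id)).intervalIntegrable 0 1
    · exact hbound
  have hcalc : ∫ t in (0:ℝ)..1, (⟪gradient f x, d⟫ + L * ‖d‖ ^ 2 * t)
      = ⟪gradient f x, d⟫ + L / 2 * ‖d‖ ^ 2 := by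
    rw [intervalIntegral.integral_add (intervalIntegrable_const)
      ((intervalIntegral.intervalIntegrable_id).const_mul _),
      intervalIntegral.integral_const, intervalIntegral.integral_const_mul,
      integral_id]
    simp only [smul_eq_mul]
    ring
  rw [hFTC, hcalc] at hmono
  linarith

lemma aux_lower (f : EuclideanSpace ℝ (Fin n) → ℝ) (L : ℝ) (hL : 0 < L)
    (hconv : ConvexOn ℝ Set.univ f) (hdiff : Differentiable ℝ f)
    (hlip : ∀ u v, ‖gradient f u - gradient f v‖ ≤ L * ‖u - v‖)
    (x y : EuclideanSpace ℝ (Fin n)) :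
    f x + ⟪gradient f x, y - x⟫ + 1 / (2 * L) * ‖gradient f y - gradient f x‖ ^ 2 ≤ f y := by
  set d := gradient f y - gradient f x with hdd
  set z := y - (1 / L) • d with hz
  have hA := aux_conv f hconv hdiff x z
  have hB := aux_descent f L hL hdiff hlip y z
  have hzx : z - x = (y - x) - (1 / L) • d := by rw [hz]; abel
  have hzy : z - y = -((1 / L) • d) := by rw [hz]; abel
  have h1 : ⟪gradient f x, z - x⟫
      = ⟪gradient f x, y - x⟫ - (1 / L) * ⟪gradient f x, d⟫ := by
    rw [hzx, inner_sub_right, real_inner_smul_right]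
  have h2 : ⟪gradient f y, z - y⟫ = -((1 / L) * ⟪gradient f y, d⟫) := by
    rw [hzy, inner_neg_right, real_inner_smul_right]
  have h3 : ‖z - y‖ ^ 2 = (1 / L) ^ 2 * ‖d‖ ^ 2 := by
    rw [hzy, norm_neg, norm_smul, Real.norm_eq_abs,
      abs_of_nonneg (by positivity : (0:ℝ) ≤ 1 / L)]
    ring
  have h4 : ⟪gradient f y, d⟫ - ⟪gradient f x, d⟫ = ‖d‖ ^ 2 := by
    rw [← inner_sub_left, ← hdd, real_inner_self_eq_norm_sq]
  have h5 : (1 / L) * ⟪gradient f y, d⟫ - (1 / L) * ⟪gradient f x, d⟫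
      = (1 / L) * ‖d‖ ^ 2 := by rw [← mul_sub, h4]
  have h6 : L / 2 * ((1 / L) ^ 2 * ‖d‖ ^ 2) = 1 / (2 * L) * ‖d‖ ^ 2 := by
    field_simp
  rw [h1] at hA
  rw [h2, h3] at hB
  have h7 : (1 / L) * ‖d‖ ^ 2 - 1 / (2 * L) * ‖d‖ ^ 2 = 1 / (2 * L) * ‖d‖ ^ 2 := by
    field_simp
    ring
  linarith

theorem stmt3 {n : ℕ} (f : EuclideanSpace ℝ (Fin n) → ℝ) (L : ℝ) (hL : 0 < L)
    (hconv : ConvexOn ℝ Set.univ f) (hdiff : Differentiable ℝ f)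
    (hlip : ∀ u v, ‖gradient f u - gradient f v‖ ≤ L * ‖u - v‖) :
    ∀ u v, ⟪u - v, gradient f u - gradient f v⟫ ≥
      (1 / L) * ‖gradient f u - gradient f v‖ ^ 2 := by
  intro u v
  have hA := aux_lower f L hL hconv hdiff hlip v u
  have hB := aux_lower f L hL hconv hdiff hlip u v
  have e1 : ⟪u - v, gradient f u - gradient f v⟫
      = ⟪gradient f u, u - v⟫ - ⟪gradient f v, u - v⟫ := by
    rw [real_inner_comm, inner_sub_left]
  have e2 : ⟪gradient f u, v - u⟫ = -⟪gradient f u, u - v⟫ := by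
    rw [show v - u = -(u - v) by abel, inner_neg_right]
  have e3 : ‖gradient f v - gradient f u‖ = ‖gradient f u - gradient f v‖ := by
    rw [← neg_sub, norm_neg]
  rw [e3] at hB
  rw [e2] at hB
  have h7 : 1 / (2 * L) * ‖gradient f u - gradient f v‖ ^ 2
      + 1 / (2 * L) * ‖gradient f u - gradient f v‖ ^ 2
      = (1 / L) * ‖gradient f u - gradient f v‖ ^ 2 := by
    field_simp
    ring
  rw [ge_iff_le, ← h7, e1]
  linarith
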